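/- (Finite determinacy, commutative shadow of Theorem 3.16 for the one-loop quiver) Let Φ ∈ ℂ[[x]] with Φ ∈ (x)², and suppose the Jacobi ideal (Φ'(x)) contains (x)^r for some r ≥ 0 (equivalently ℂ[[x]]/(Φ') is finite-dimensional with ord(Φ') ≤ r). Then Φ is (r+1)-determined: any Ψ ∈ ℂ[[x]] with Ψ − Φ ∈ (x)^{r+2} satisfies Ψ = H(Φ) for some continuous ℂ-algebra automorphism H of ℂ[[x]]. -/

import Mathlib

open PowerSeries

namespace FD


open Finset
noncomputable section

/-- Substitution of `g` (with zero constant term) into `f`. -/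
def subst (g f : ℂ⟦X⟧) : ℂ⟦X⟧ :=
  PowerSeries.mk fun d => coeff d ((trunc (d + 1) f).eval₂ C g)

variable {g : ℂ⟦X⟧}

lemma coeff_pow_eq_zero (hg : constantCoeff g = 0) {d i : ℕ} (h : d < i) :
    coeff d (g ^ i) = 0 := by
  have hX : (X : ℂ⟦X⟧) ^ i ∣ g ^ i := pow_dvd_pow_of_dvd (X_dvd_iff.mpr hg) i
  exact (X_pow_dvd_iff.mp hX) d h

/-- Master coefficient formula for substitution. -/
lemma coeff_subst (hg : constantCoeff g = 0) (f : ℂ⟦X⟧) {d N : ℕ} (hN : d < N) :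
    coeff d (subst g f) = ∑ i ∈ range N, coeff i f * coeff d (g ^ i) := by
  have key : ∀ M : ℕ, coeff d ((trunc M f).eval₂ C g) =
      ∑ i ∈ range M, coeff i f * coeff d (g ^ i) := by
    intro M
    rw [eval₂_trunc_eq_sum_range, map_sum]
    exact Finset.sum_congr rfl fun i _ => by rw [coeff_C_mul]
  have stable : ∀ M : ℕ, d < M →
      ∑ i ∈ range M, coeff i f * coeff d (g ^ i)
        = ∑ i ∈ range (d+1), coeff i f * coeff d (g ^ i) := by
    intro M hM
    refine (Finset.sum_subset (by intro x hx; simp only [mem_range] at *; omega) ?_).symm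
    intro x hx hx'
    simp only [mem_range] at hx hx'
    rw [coeff_pow_eq_zero hg (by omega), mul_zero]
  rw [subst, coeff_mk, key, stable _ (Nat.lt_succ_self d), ← stable _ hN]

lemma coeff_subst' (hg : constantCoeff g = 0) (f : ℂ⟦X⟧) {d N : ℕ} (hN : d < N) :
    coeff d (subst g f) = coeff d ((trunc N f).eval₂ C g) := by
  rw [coeff_subst hg f hN, eval₂_trunc_eq_sum_range, map_sum]
  exact (Finset.sum_congr rfl fun i _ => by rw [coeff_C_mul]).symm

lemma subst_add (hg : constantCoeff g = 0) (f₁ f₂ : ℂ⟦X⟧) : subst g (f₁ + f₂) = subst g f₁ + subst g f₂ := by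
  ext d
  rw [map_add, coeff_subst hg _ (Nat.lt_succ_self d), coeff_subst hg _ (Nat.lt_succ_self d),
    coeff_subst hg _ (Nat.lt_succ_self d), ← Finset.sum_add_distrib]
  exact Finset.sum_congr rfl fun i _ => by rw [map_add, add_mul]

lemma subst_C (hg : constantCoeff g = 0) (a : ℂ) : subst g (C a) = C a := by
  ext d
  rw [coeff_subst hg _ (Nat.lt_succ_self d)]
  rw [Finset.sum_eq_single 0]
  · simp [coeff_C]
  · intro i _ hi
    rw [coeff_C, if_neg hi, zero_mul]
  · simp

lemma subst_one (hg : constantCoeff g = 0) : subst g (1 : ℂ⟦X⟧) = 1 := by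
  have := subst_C hg 1; simpa using this

lemma subst_X (hg : constantCoeff g = 0) : subst g (X : ℂ⟦X⟧) = g := by
  ext d
  rw [coeff_subst hg _ (show d < d + 2 by omega)]
  rw [Finset.sum_eq_single 1]
  · simp [coeff_X]
  · intro i _ hi
    rw [coeff_X, if_neg hi, zero_mul]
  · intro h; exact absurd (by simp : 1 ∈ range (d+2)) h

lemma subst_mul (hg : constantCoeff g = 0) (f₁ f₂ : ℂ⟦X⟧) : subst g (f₁ * f₂) = subst g f₁ * subst g f₂ := by
  ext d
  set P₁ := trunc (d+1) f₁
  set P₂ := trunc (d+1) f₂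
  have hM : (P₁ * P₂).natDegree < max (d+1) ((P₁*P₂).natDegree + 1) := by
    exact lt_of_lt_of_le (Nat.lt_succ_self _) (le_max_right _ _)
  have hd : d < max (d+1) ((P₁*P₂).natDegree + 1) := lt_of_lt_of_le (Nat.lt_succ_self d) (le_max_left _ _)
  have lhs : coeff d (subst g (f₁ * f₂)) = coeff d ((P₁ * P₂).eval₂ C g) := by
    rw [coeff_subst' hg _ (Nat.lt_succ_self d), ← trunc_trunc_mul_trunc,
      ← coeff_subst' hg _ (Nat.lt_succ_self d), ← Polynomial.coe_mul,
      coeff_subst' hg _ hd, trunc_coe_eq_self hM]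
  rw [lhs, Polynomial.eval₂_mul, coeff_mul, coeff_mul]
  refine Finset.sum_congr rfl fun p hp => ?_
  rw [Finset.HasAntidiagonal.mem_antidiagonal] at hp
  rw [coeff_subst' hg f₁ (show p.1 < d + 1 by omega),
    coeff_subst' hg f₂ (show p.2 < d + 1 by omega)]

/-- Substitution as an algebra homomorphism. -/
def substAlgHom (g : ℂ⟦X⟧) (hg : constantCoeff g = 0) : ℂ⟦X⟧ →ₐ[ℂ] ℂ⟦X⟧ where
  toFun := subst g
  map_one' := subst_one hg
  map_mul' := subst_mul hg
  map_zero' := by simpa using subst_C hg 0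
  map_add' := subst_add hg
  commutes' := fun a => by
    simp only [← C_eq_algebraMap]; exact subst_C hg a

@[simp] lemma substAlgHom_apply (hg : constantCoeff g = 0) (f : ℂ⟦X⟧) : substAlgHom g hg f = subst g f := rfl

lemma constantCoeff_subst (hg : constantCoeff g = 0) (f : ℂ⟦X⟧) : constantCoeff (subst g f) = constantCoeff f := by
  have h := coeff_subst hg f (show 0 < 1 by norm_num)
  simp only [range_one, Finset.sum_singleton, pow_zero, coeff_one] at h
  simpa using h

lemma subst_zero (hg : constantCoeff g = 0) : subst g 0 = 0 := by
  simpa using subst_C hg 0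

lemma subst_sub (hg : constantCoeff g = 0) (f₁ f₂ : ℂ⟦X⟧) :
    subst g (f₁ - f₂) = subst g f₁ - subst g f₂ := by
  have : (substAlgHom g hg) (f₁ - f₂) = (substAlgHom g hg) f₁ - (substAlgHom g hg) f₂ :=
    map_sub _ _ _
  simpa using this

lemma subst_X_pow (hg : constantCoeff g = 0) (d : ℕ) : subst g (X ^ d) = g ^ d := by
  rw [show subst g (X ^ d) = (substAlgHom g hg) (X ^ d) from rfl, map_pow, substAlgHom_apply,
    subst_X hg]

lemma coeff_X_pow_mul_self (p : ℂ⟦X⟧) (d : ℕ) :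
    coeff d (X ^ d * p) = constantCoeff p := by
  simpa using coeff_X_pow_mul p d 0

/-- The polynomial part of `f` below degree `d`, as a power series. -/
def sect (f : ℂ⟦X⟧) (d : ℕ) : ℂ⟦X⟧ := ∑ i ∈ range d, C (coeff i f) * X ^ i

lemma coeff_sect (f : ℂ⟦X⟧) (d k : ℕ) :
    coeff k (sect f d) = if k < d then coeff k f else 0 := by
  rw [sect, map_sum]
  simp only [coeff_C_mul_X_pow]
  rw [Finset.sum_ite_eq (range d) k (fun i => coeff i f)]
  simp [mem_range]

/-- The shifted tail. -/
def shift (f : ℂ⟦X⟧) (d : ℕ) : ℂ⟦X⟧ := PowerSeries.mk fun m => coeff (m + d) f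

lemma constantCoeff_shift (f : ℂ⟦X⟧) (d : ℕ) :
    constantCoeff (shift f d) = coeff d f := by
  rw [← coeff_zero_eq_constantCoeff, shift, coeff_mk, Nat.zero_add]

lemma sect_add_shift (f : ℂ⟦X⟧) (d : ℕ) : f = sect f d + X ^ d * shift f d := by
  ext k
  rw [map_add, coeff_sect, coeff_X_pow_mul']
  by_cases h : k < d
  · rw [if_pos h, if_neg (by omega), add_zero]
  · rw [if_neg h, if_pos (by omega), shift, coeff_mk, Nat.sub_add_cancel (by omega), zero_add]

lemma constantCoeff_X_mul (u : ℂ⟦X⟧) : constantCoeff (X * u) = 0 := by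
  rw [map_mul, constantCoeff_X, zero_mul]

lemma coeff_one_X_mul (u : ℂ⟦X⟧) : coeff 1 (X * u) = constantCoeff u := by
  rw [show (1:ℕ) = 0 + 1 from rfl, coeff_succ_X_mul, coeff_zero_eq_constantCoeff]

lemma coeff_subst_sect_aux (u f : ℂ⟦X⟧) (d : ℕ) :
    coeff d (subst (X * u) f) =
      coeff d (subst (X * u) (sect f d)) + coeff d f * (constantCoeff u) ^ d := by
  have hg : constantCoeff (X * u) = 0 := constantCoeff_X_mul u
  conv_lhs => rw [sect_add_shift f d]
  rw [subst_add hg, map_add, subst_mul hg, subst_X_pow hg, mul_pow, mul_assoc,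
    coeff_X_pow_mul_self, map_mul, map_pow, constantCoeff_subst hg, constantCoeff_shift]
  ring_nf

lemma coeff_subst_sect (hg : constantCoeff g = 0) (f : ℂ⟦X⟧) (d : ℕ) :
    coeff d (subst g f) =
      coeff d (subst g (sect f d)) + coeff d f * (coeff 1 g) ^ d := by
  obtain ⟨u, hu⟩ := X_dvd_iff.mpr hg
  subst hu
  rw [coeff_one_X_mul]
  exact coeff_subst_sect_aux u f d

lemma subst_injective (hg : constantCoeff g = 0) (hc : coeff 1 g ≠ 0) :
    Function.Injective (subst g) := by
  have key : ∀ f : ℂ⟦X⟧, subst g f = 0 → f = 0 := by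
    intro f hf
    ext d
    induction d using Nat.strong_induction_on with
    | _ d ih =>
      have hsect : sect f d = 0 := by
        rw [sect]
        refine Finset.sum_eq_zero fun i hi => ?_
        have := ih i (mem_range.mp hi)
        rw [map_zero] at this
        rw [this]
        simp
      have h2 := coeff_subst_sect hg f d
      simp only [hf, hsect, subst_zero hg, map_zero, zero_add] at h2
      have h3 := (mul_eq_zero.mp h2.symm).resolve_right (pow_ne_zero d hc)
      simpa using h3
  intro f₁ f₂ h
  have h0 : subst g (f₁ - f₂) = 0 := by rw [subst_sub hg, h, sub_self]
  exact sub_eq_zero.mp (key _ h0)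

/-- Coefficients of a preimage under substitution, by strong recursion. -/
noncomputable def invCoeff (g h : ℂ⟦X⟧) : ℕ → ℂ
  | d => (coeff d h -
      coeff d (subst g (∑ i ∈ (range d).attach, C (invCoeff g h i.1) * X ^ i.1))) /
      (coeff 1 g) ^ d
  decreasing_by exact mem_range.mp i.2

lemma subst_surjective (hg : constantCoeff g = 0) (hc : coeff 1 g ≠ 0) :
    Function.Surjective (subst g) := by
  intro h
  refine ⟨PowerSeries.mk (invCoeff g h), ?_⟩
  ext d
  have hsect : sect (PowerSeries.mk (invCoeff g h)) d
      = ∑ i ∈ (range d).attach, C (invCoeff g h i.1) * X ^ i.1 := by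
    rw [sect, ← Finset.sum_attach (range d) (fun i => C (coeff i (PowerSeries.mk (invCoeff g h))) * X ^ i)]
    exact Finset.sum_congr rfl fun i _ => by rw [coeff_mk]
  rw [coeff_subst_sect hg _ d, hsect, coeff_mk]
  rw [invCoeff, div_mul_cancel₀ _ (pow_ne_zero d hc)]
  ring

/-- Substitution by `g` with `g(0) = 0`, `g'(0) ≠ 0`, as an algebra automorphism. -/
noncomputable def substEquiv (g : ℂ⟦X⟧) (hg : constantCoeff g = 0)
    (hc : coeff 1 g ≠ 0) : ℂ⟦X⟧ ≃ₐ[ℂ] ℂ⟦X⟧ :=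
  AlgEquiv.ofBijective (substAlgHom g hg) ⟨subst_injective hg hc, subst_surjective hg hc⟩

@[simp] lemma substEquiv_apply (g : ℂ⟦X⟧) (hg : constantCoeff g = 0)
    (hc : coeff 1 g ≠ 0) (f : ℂ⟦X⟧) : substEquiv g hg hc f = subst g f := rfl

/-- Coefficients of an `n`-th root of a power series with constant term 1. -/
noncomputable def rootCoeff (n : ℕ) (u : ℂ⟦X⟧) : ℕ → ℂ
  | 0 => 1
  | d + 1 => (coeff (d+1) u -
      coeff (d+1) ((∑ i ∈ (range (d+1)).attach, C (rootCoeff n u i.1) * X ^ i.1) ^ n)) / n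
  decreasing_by exact mem_range.mp i.2

/-- An `n`-th root of a power series with constant term 1. -/
noncomputable def nthRoot (n : ℕ) (u : ℂ⟦X⟧) : ℂ⟦X⟧ := PowerSeries.mk (rootCoeff n u)

lemma constantCoeff_nthRoot (n : ℕ) (u : ℂ⟦X⟧) :
    constantCoeff (nthRoot n u) = 1 := by
  rw [← coeff_zero_eq_constantCoeff, nthRoot, coeff_mk, rootCoeff]

lemma nthRoot_pow (n : ℕ) (hn : 0 < n) (u : ℂ⟦X⟧) (hu : constantCoeff u = 1) :
    (nthRoot n u) ^ n = u := by
  have hn' : (n : ℂ) ≠ 0 := Nat.cast_ne_zero.mpr hn.ne'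
  set w := nthRoot n u with hw
  have hw0 : constantCoeff w = 1 := constantCoeff_nthRoot n u
  ext d
  cases d with
  | zero =>
    rw [coeff_zero_eq_constantCoeff, map_pow, hw0, one_pow, hu]
  | succ d =>
    set P := sect w (d+1) with hP
    have hP0 : constantCoeff P = 1 := by
      rw [← coeff_zero_eq_constantCoeff, hP, coeff_sect, if_pos (Nat.succ_pos d),
        coeff_zero_eq_constantCoeff, hw0]
    have hwP : w - P = X ^ (d+1) * shift w (d+1) := by
      have h := sect_add_shift w (d+1)
      rw [hP]; linear_combination h
    have hkey : coeff (d+1) (w^n) = coeff (d+1) (P^n) + (n : ℂ) * coeff (d+1) w := by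
      have h1 : w^n - P^n = X^(d+1) * (shift w (d+1) * (∑ i ∈ range n, w^i * P^(n-1-i))) := by
        rw [← geom_sum₂_mul w P n, hwP]; ring
      have h2 : coeff (d+1) (w^n) - coeff (d+1) (P^n) = (n:ℂ) * coeff (d+1) w := by
        rw [← map_sub, h1, coeff_X_pow_mul_self, map_mul, constantCoeff_shift, map_sum]
        have hterm : ∀ i ∈ range n, constantCoeff (w^i * P^(n-1-i)) = 1 := fun i _ => by
          rw [map_mul, map_pow, map_pow, hw0, hP0, one_pow, one_pow, one_mul]
        rw [Finset.sum_congr rfl hterm, Finset.sum_const, card_range, nsmul_eq_mul, mul_one]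
        ring
      linear_combination h2
    have hsum : (∑ i ∈ (range (d+1)).attach, C (rootCoeff n u i.1) * X ^ i.1) = P := by
      rw [hP, sect, ← Finset.sum_attach (range (d+1)) (fun i => C (coeff i w) * X ^ i)]
      exact Finset.sum_congr rfl fun i _ => by rw [hw, nthRoot, coeff_mk]
    have hcoeffw : coeff (d+1) w = (coeff (d+1) u - coeff (d+1) (P^n)) / n := by
      rw [hw, nthRoot, coeff_mk, rootCoeff, hsum]
    rw [hkey, hcoeffw]
    field_simp
    ring

end

end FD

/-- (Finite determinacy in `ℂ[[x]]`.)  Let `Φ ∈ (x)²` and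
suppose the Jacobi ideal `(Φ')` contains `(x)^r`.  Then `Φ` is
`(r+1)`-determined: any `Ψ` with `Ψ − Φ ∈ (x)^{r+2}` is obtained from `Φ` by a
continuous `ℂ`-algebra automorphism of `ℂ[[x]]`. -/
theorem finite_determinacy_one_variable
    (Φ Ψ : PowerSeries ℂ) (r : ℕ)
    (hΦ : Φ ∈ Ideal.span {(X : PowerSeries ℂ)} ^ 2)
    (hjac : Ideal.span {(X : PowerSeries ℂ)} ^ r ≤
      Ideal.span {PowerSeries.derivative ℂ Φ})
    (hjet : Ψ - Φ ∈ Ideal.span {(X : PowerSeries ℂ)} ^ (r + 2)) :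
    ∃ H : PowerSeries ℂ ≃ₐ[ℂ] PowerSeries ℂ,
      (∀ f ∈ Ideal.span {(X : PowerSeries ℂ)}, H f ∈ Ideal.span {(X : PowerSeries ℂ)}) ∧
      H Φ = Ψ := by
  classical
  rw [Ideal.span_singleton_pow, Ideal.mem_span_singleton] at hΦ hjet
  have hΦ' : (PowerSeries.derivative ℂ Φ) ∣ (X : ℂ⟦X⟧) ^ r := by
    rw [← Ideal.mem_span_singleton]
    exact hjac (by rw [Ideal.span_singleton_pow]; exact Ideal.mem_span_singleton_self _)
  have hD0 : PowerSeries.derivative ℂ Φ ≠ 0 := by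
    intro h
    rw [h] at hΦ'
    exact pow_ne_zero r X_ne_zero (zero_dvd_iff.mp hΦ')
  have hΦ0 : Φ ≠ 0 := fun h => hD0 (by rw [h, map_zero])
  have hford : Φ.order < ⊤ := order_finite_iff_ne_zero.mpr hΦ0
  obtain ⟨n, hn⟩ : ∃ n : ℕ, Φ.order = n := ⟨Φ.order.lift hford, (ENat.coe_lift _ _).symm⟩
  obtain ⟨hcoeffn, hlow⟩ := order_eq_nat.mp hn
  have h01 := X_pow_dvd_iff.mp hΦ
  have hn2 : 2 ≤ n := by
    by_contra h
    exact hcoeffn (h01 n (by omega))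
  obtain ⟨m, rfl⟩ : ∃ m, n = m + 2 := ⟨n - 2, by omega⟩
  -- the derivative has order `m + 1`
  have hDcoeff : coeff (m+1) (PowerSeries.derivative ℂ Φ) ≠ 0 := by
    rw [coeff_derivative]
    exact mul_ne_zero hcoeffn (Nat.cast_add_one_ne_zero (m+1))
  have hDlow : ∀ i < m + 1, coeff i (PowerSeries.derivative ℂ Φ) = 0 := fun i hi => by
    rw [coeff_derivative, hlow (i+1) (by omega), zero_mul]
  have hDord : (PowerSeries.derivative ℂ Φ).order = ((m+1 : ℕ) : ℕ∞) :=
    order_eq_nat.mpr ⟨hDcoeff, hDlow⟩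
  obtain ⟨q, hq⟩ := hΦ'
  have hmr : m + 1 ≤ r := by
    have h := order_mul (PowerSeries.derivative ℂ Φ) q
    rw [← hq, order_X_pow, hDord] at h
    have : ((m+1 : ℕ) : ℕ∞) ≤ (r : ℕ∞) := by rw [h]; exact le_self_add
    exact_mod_cast this
  -- decompose `Φ` and `Ψ`
  obtain ⟨U, hU⟩ : (X : ℂ⟦X⟧) ^ (m+2) ∣ Φ := X_pow_dvd_iff.mpr fun i hi => hlow i hi
  have hc : constantCoeff U = coeff (m+2) Φ := by
    rw [hU, FD.coeff_X_pow_mul_self]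
  set c := constantCoeff U with hcdef
  have hc0 : c ≠ 0 := by rw [hc]; exact hcoeffn
  obtain ⟨W, hW⟩ : (X : ℂ⟦X⟧) ^ (m+3) ∣ Ψ - Φ :=
    dvd_trans (pow_dvd_pow X (by omega : m+3 ≤ r+2)) hjet
  set V := U + X * W with hV
  have hΨ : Ψ = X ^ (m+2) * V := by
    rw [hV]; linear_combination hW + hU
  have hcV : constantCoeff V = c := by
    rw [hV, map_add, FD.constantCoeff_X_mul, add_zero]
  set u := C c⁻¹ * U with hu
  set v := C c⁻¹ * V with hv
  have hu1 : constantCoeff u = 1 := by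
    rw [hu, map_mul, constantCoeff_C, ← hcdef, inv_mul_cancel₀ hc0]
  have hv1 : constantCoeff v = 1 := by
    rw [hv, map_mul, constantCoeff_C, hcV, inv_mul_cancel₀ hc0]
  have hCcu : C c * u = U := by
    rw [hu, ← mul_assoc, ← map_mul, mul_inv_cancel₀ hc0, map_one, one_mul]
  have hCcv : C c * v = V := by
    rw [hv, ← mul_assoc, ← map_mul, mul_inv_cancel₀ hc0, map_one, one_mul]
  -- the two roots
  set w := FD.nthRoot (m+2) u with hwdef
  set z := FD.nthRoot (m+2) v with hzdef
  have hwpow : w ^ (m+2) = u := FD.nthRoot_pow (m+2) (by omega) u hu1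
  have hzpow : z ^ (m+2) = v := FD.nthRoot_pow (m+2) (by omega) v hv1
  have hw0 : constantCoeff w = 1 := FD.constantCoeff_nthRoot _ _
  have hz0 : constantCoeff z = 1 := FD.constantCoeff_nthRoot _ _
  have hφ0 : constantCoeff (X * w) = 0 := FD.constantCoeff_X_mul w
  have hφ1 : coeff 1 (X * w) ≠ 0 := by
    rw [FD.coeff_one_X_mul, hw0]; exact one_ne_zero
  have hψ0 : constantCoeff (X * z) = 0 := FD.constantCoeff_X_mul z
  have hψ1 : coeff 1 (X * z) ≠ 0 := by
    rw [FD.coeff_one_X_mul, hz0]; exact one_ne_zero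
  set E := FD.substEquiv (X * w) hφ0 hφ1 with hEdef
  set E' := FD.substEquiv (X * z) hψ0 hψ1 with hE'def
  have hE : E (C c * X ^ (m+2)) = Φ := by
    rw [map_mul, map_pow]
    rw [show E (C c) = FD.subst (X * w) (C c) from rfl, FD.subst_C hφ0]
    rw [show E X = FD.subst (X * w) X from rfl, FD.subst_X hφ0]
    rw [mul_pow, hwpow, ← mul_assoc, mul_comm (C c) (X ^ (m+2)), mul_assoc, hCcu, hU]
  have hE' : E' (C c * X ^ (m+2)) = Ψ := by
    rw [map_mul, map_pow]
    rw [show E' (C c) = FD.subst (X * z) (C c) from rfl, FD.subst_C hψ0]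
    rw [show E' X = FD.subst (X * z) X from rfl, FD.subst_X hψ0]
    rw [mul_pow, hzpow, ← mul_assoc, mul_comm (C c) (X ^ (m+2)), mul_assoc, hCcv, hΨ]
  refine ⟨E.symm.trans E', ?_, ?_⟩
  · intro f hf
    rw [Ideal.mem_span_singleton, X_dvd_iff] at hf ⊢
    have h2 : constantCoeff (E.symm f) = constantCoeff f := by
      have h3 := FD.constantCoeff_subst hφ0 (E.symm f)
      rw [show FD.subst (X * w) (E.symm f) = E (E.symm f) from rfl,
        AlgEquiv.apply_symm_apply] at h3
      exact h3.symm
    rw [AlgEquiv.trans_apply,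
      show E' (E.symm f) = FD.subst (X * z) (E.symm f) from rfl,
      FD.constantCoeff_subst hψ0, h2, hf]
  · rw [AlgEquiv.trans_apply, (AlgEquiv.symm_apply_eq E).mpr hE.symm, hE']
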